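/- Fix an integer a ≥ 1. Let m ≥ 1 be an integer, let P(Y) ∈ R[Y] be m-triangular of degree d, and let Q(Y) ∈ R[Y] be a linear polynomial of degree e. Then P(Y)·Q(Y) is (m+1)-triangular (of degree d+e). -/

import Mathlib

open Polynomial

noncomputable section

/-- The ring `R = ℂ[u₀,…,u_{a−1}][u_a, u_a⁻¹]`: Laurent polynomials in `u_a`
over the polynomial ring `ℂ[u₀,…,u_{a−1}]`. -/
abbrev LaurentRing (a : ℕ) : Type := LaurentPolynomial (MvPolynomial (Fin a) ℂ)

/-- The generators `u_0, …, u_a` of `R`; `u i` for `i < a` is the polynomial variable `u_i`,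
and `u a` is the Laurent variable `u_a`. -/
noncomputable def u (a : ℕ) (i : ℕ) : LaurentRing a :=
  if h : i < a then LaurentPolynomial.C (MvPolynomial.X (⟨i, h⟩ : Fin a))
  else LaurentPolynomial.T 1

/-- `P ∈ R[Y]` is `m`-triangular of degree `d` if `deg P = d ≥ a` and for `d − a ≤ l ≤ d`
one has `p_l = q_l u_a^{m−1} u_{a−d+l} + P_l` with `q_l ∈ ℚ`, `q_l > 0`, and
`P_l ∈ ℂ[u_{a−d+l+1},…,u_a]`; for `l = d` this means `p_d = q_d u_a^m`. -/
def IsTriangular (a m d : ℕ) (P : Polynomial (LaurentRing a)) : Prop :=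
  P.natDegree = d ∧ a ≤ d ∧
  (∃ q : ℚ, 0 < q ∧ P.coeff d = algebraMap ℚ (LaurentRing a) q * (u a a) ^ m) ∧
  (∀ l, d - a ≤ l → l < d →
    ∃ (q : ℚ) (Pl : LaurentRing a), 0 < q ∧
      Pl ∈ Algebra.adjoin ℂ (u a '' {i : ℕ | a - (d - l) + 1 ≤ i ∧ i ≤ a}) ∧
      P.coeff l = algebraMap ℚ (LaurentRing a) q *
        ((u a a) ^ (m - 1) * u a (a - (d - l))) + Pl)


/-- `Q ∈ R[Y]` is linear of degree `e` if `deg Q = e ≤ a` and each coefficient satisfies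
`p_l = q_l u_{a−e+l}` with `q_l ∈ ℚ`, `q_l > 0`. -/
def IsLinear (a e : ℕ) (Q : Polynomial (LaurentRing a)) : Prop :=
  Q.natDegree = e ∧ e ≤ a ∧
  ∀ l ≤ e, ∃ q : ℚ, 0 < q ∧
    Q.coeff l = algebraMap ℚ (LaurentRing a) q * u a (a - e + l)

lemma u_top (a : ℕ) : u a a = LaurentPolynomial.T 1 := by simp [u]

lemma algebraMap_rat_ne_zero (a : ℕ) {q : ℚ} (hq : q ≠ 0) :
    algebraMap ℚ (LaurentRing a) q ≠ 0 := by
  intro h0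
  exact hq (RingHom.injective (algebraMap ℚ (LaurentRing a)) (by rw [h0, map_zero]))

lemma algebraMap_rat_mem (a : ℕ) (S : Subalgebra ℂ (LaurentRing a)) (q : ℚ) :
    algebraMap ℚ (LaurentRing a) q ∈ S := by
  rw [IsScalarTower.algebraMap_apply ℚ ℂ (LaurentRing a)]
  exact S.algebraMap_mem _

/-- the product of an `m`-triangular polynomial of degree `d` and a linear
polynomial of degree `e` is `(m+1)`-triangular (of degree `d+e`). -/
theorem mul_linear_isTriangular (a : ℕ) (ha : 1 ≤ a) (m : ℕ) (hm : 1 ≤ m) (d e : ℕ)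
    (P Q : Polynomial (LaurentRing a))
    (hP : IsTriangular a m d P) (hQ : IsLinear a e Q) :
    IsTriangular a (m + 1) (d + e) (P * Q) := by
  obtain ⟨hPdeg, had, ⟨qP, hqP, hPd⟩, hPl⟩ := hP
  obtain ⟨hQdeg, hea, hQl⟩ := hQ
  have hu_unit : IsUnit (u a a) := (u_top a) ▸ LaurentPolynomial.isUnit_T 1
  obtain ⟨qQ, hqQ, hQe⟩ := hQl e le_rfl
  rw [Nat.sub_add_cancel hea] at hQe
  have hPcne : P.coeff d ≠ 0 := by
    rw [hPd]
    exact mul_ne_zero (algebraMap_rat_ne_zero a hqP.ne') ((hu_unit.pow m).ne_zero)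
  have hQcne : Q.coeff e ≠ 0 := by
    rw [hQe]
    exact mul_ne_zero (algebraMap_rat_ne_zero a hqQ.ne') (hu_unit.ne_zero)
  have hPne : P ≠ 0 := fun h => hPcne (by simp [h])
  have hQne : Q ≠ 0 := fun h => hQcne (by simp [h])
  have hdeg : (P * Q).natDegree = d + e := by
    rw [Polynomial.natDegree_mul hPne hQne, hPdeg, hQdeg]
  refine ⟨hdeg, le_trans had (Nat.le_add_right d e), ?_, ?_⟩
  · -- top coefficient
    refine ⟨qP * qQ, mul_pos hqP hqQ, ?_⟩
    have htop : (P * Q).coeff (d + e) = P.coeff d * Q.coeff e := by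
      have := Polynomial.coeff_mul_degree_add_degree P Q
      rwa [hPdeg, hQdeg, Polynomial.leadingCoeff, Polynomial.leadingCoeff, hPdeg, hQdeg] at this
    rw [htop, hPd, hQe, map_mul, pow_succ]
    ring
  · intro l hl1 hl2
    set k := d + e - l with hk
    have hk1 : 1 ≤ k := by omega
    have hka : k ≤ a := by omega
    have hlk : l + k = d + e := by omega
    set S := Algebra.adjoin ℂ (u a '' {i : ℕ | a - k + 1 ≤ i ∧ i ≤ a}) with hS
    have hmemS : ∀ i, a - k + 1 ≤ i → i ≤ a → u a i ∈ S :=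
      fun i h1 h2 => Algebra.subset_adjoin ⟨i, ⟨h1, h2⟩, rfl⟩
    have huaS : u a a ∈ S := hmemS a (by omega) le_rfl
    have hmono : ∀ s : ℕ, s ≤ k →
        Algebra.adjoin ℂ (u a '' {i : ℕ | a - s + 1 ≤ i ∧ i ≤ a}) ≤ S := by
      intro s hs
      refine Algebra.adjoin_mono (Set.image_mono (fun x hx => ?_))
      obtain ⟨hx1, hx2⟩ := hx
      exact ⟨by omega, hx2⟩
    -- decomposition of a generic non-special term
    have key : ∀ p ∈ Finset.HasAntidiagonal.antidiagonal l, p ≠ (d - k, e) →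
        ∃ q : ℚ, 0 ≤ q ∧ ∃ r ∈ S, P.coeff p.1 * Q.coeff p.2 =
          algebraMap ℚ (LaurentRing a) q * (u a a ^ m * u a (a - k)) + r := by
      rintro ⟨i, j⟩ hmem hne
      rw [Finset.HasAntidiagonal.mem_antidiagonal] at hmem
      by_cases hje : j ≤ e
      · by_cases hid : i ≤ d
        · rcases eq_or_lt_of_le hid with hieq | hilt
          · -- i = d, j = e - k, pure leading term
            obtain ⟨q2, hq2, hQj⟩ := hQl j hje
            have hidx : a - e + j = a - k := by omega
            refine ⟨qP * q2, le_of_lt (mul_pos hqP hq2), 0, zero_mem S, ?_⟩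
            rw [hieq, hPd, hQj, hidx, map_mul]
            ring
          · -- i < d : whole term goes to the remainder
            obtain ⟨q1, P1, hq1, hP1S, hP1⟩ := hPl i (by omega) hilt
            obtain ⟨q2, hq2, hQj⟩ := hQl j hje
            have hjlt : j < e := by
              by_contra hge
              have hje' : j = e := le_antisymm hje (not_lt.mp hge)
              have hieq2 : i = d - k := by omega
              exact hne (by rw [hieq2, hje'])
            refine ⟨0, le_rfl, P.coeff i * Q.coeff j, ?_, by simp⟩
            rw [hP1, hQj]
            refine mul_mem (add_mem (mul_mem (algebraMap_rat_mem a S q1)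
              (mul_mem (pow_mem huaS _) (hmemS _ (by omega) (by omega))))
              (hmono (d - i) (by omega) hP1S))
              (mul_mem (algebraMap_rat_mem a S q2) (hmemS _ (by omega) (by omega)))
        · have : P.coeff i = 0 :=
            Polynomial.coeff_eq_zero_of_natDegree_lt (by rw [hPdeg]; omega)
          exact ⟨0, le_rfl, 0, zero_mem S, by simp [this]⟩
      · have : Q.coeff j = 0 :=
          Polynomial.coeff_eq_zero_of_natDegree_lt (by rw [hQdeg]; omega)
        exact ⟨0, le_rfl, 0, zero_mem S, by simp [this]⟩
    -- the special term
    have hspec : ∃ q0 : ℚ, 0 < q0 ∧ ∃ r0 ∈ S, P.coeff (d - k) * Q.coeff e =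
        algebraMap ℚ (LaurentRing a) q0 * (u a a ^ m * u a (a - k)) + r0 := by
      obtain ⟨q1, P1, hq1, hP1S, hP1⟩ := hPl (d - k) (by omega) (by omega)
      have hdk : d - (d - k) = k := by omega
      rw [hdk] at hP1S hP1
      refine ⟨q1 * qQ, mul_pos hq1 hqQ,
        P1 * (algebraMap ℚ (LaurentRing a) qQ * u a a), ?_, ?_⟩
      · exact mul_mem (hmono k le_rfl hP1S)
          (mul_mem (algebraMap_rat_mem a S qQ) huaS)
      · have hpow : u a a ^ (m - 1) * u a a = u a a ^ m := by
          rw [← pow_succ]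
          congr 1
          omega
        calc P.coeff (d - k) * Q.coeff e
            = algebraMap ℚ (LaurentRing a) (q1 * qQ) *
              ((u a a ^ (m - 1) * u a a) * u a (a - k)) +
              P1 * (algebraMap ℚ (LaurentRing a) qQ * u a a) := by
              rw [hP1, hQe, map_mul]; ring
          _ = _ := by rw [hpow]
    obtain ⟨q0, hq0, r0, hr0S, hr0⟩ := hspec
    have hmemanti : ((d - k, e) : ℕ × ℕ) ∈ Finset.HasAntidiagonal.antidiagonal l := by
      rw [Finset.HasAntidiagonal.mem_antidiagonal]; omega
    have hsum : (P * Q).coeff l =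
        (∑ p ∈ (Finset.HasAntidiagonal.antidiagonal l).erase (d - k, e), P.coeff p.1 * Q.coeff p.2) +
          P.coeff (d - k) * Q.coeff e := by
      rw [Polynomial.coeff_mul, ← Finset.sum_erase_add _ _ hmemanti]
    have hrest : ∃ q : ℚ, 0 ≤ q ∧ ∃ r ∈ S,
        (∑ p ∈ (Finset.HasAntidiagonal.antidiagonal l).erase (d - k, e), P.coeff p.1 * Q.coeff p.2) =
          algebraMap ℚ (LaurentRing a) q * (u a a ^ m * u a (a - k)) + r := by
      refine Finset.sum_induction (fun p : ℕ × ℕ => P.coeff p.1 * Q.coeff p.2)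
        (fun x => ∃ q : ℚ, 0 ≤ q ∧ ∃ r ∈ S, x =
          algebraMap ℚ (LaurentRing a) q * (u a a ^ m * u a (a - k)) + r)
        ?_ ⟨0, le_rfl, 0, zero_mem S, by simp⟩ ?_
      · rintro x y ⟨qx, hqx, rx, hrxS, hx⟩ ⟨qy, hqy, ry, hryS, hy⟩
        exact ⟨qx + qy, add_nonneg hqx hqy, rx + ry, add_mem hrxS hryS,
          by rw [hx, hy, map_add]; ring⟩
      · intro p hp
        rw [Finset.mem_erase] at hp
        exact key p hp.2 hp.1
    obtain ⟨q1, hq1, r1, hr1S, hr1⟩ := hrest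
    refine ⟨q1 + q0, r1 + r0, by linarith, add_mem hr1S hr0S, ?_⟩
    have hm1 : m + 1 - 1 = m := by omega
    rw [hm1, hsum, hr1, hr0, map_add]
    ring
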